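/- Let N be a norm on ℝⁿ and let M ⊂ ℝⁿ be an infinite bounded set. Then there exists an infinite subset M' ⊆ M such that all the distances ‖x − x'‖_N over unordered pairs of distinct points x, x' ∈ M' are pairwise distinct; that is, for x, x', y, y' ∈ M' with x ≠ x' and y ≠ y', the equality ‖x − x'‖_N = ‖y − y'‖_N implies {x, x'} = {y, y'}. -/

import Mathlib

open Filter Metric Bornology
open scoped Topology

/-- `N` is a norm on ℝⁿ. -/
def IsNormOn (n : ℕ) (N : (Fin n → ℝ) → ℝ) : Prop :=
  (∀ x, N x = 0 ↔ x = 0) ∧ (∀ (a : ℝ) (x), N (a • x) = |a| * N x) ∧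
  (∀ x y, N (x + y) ≤ N x + N y)

namespace DistinctDistAux

variable {n : ℕ} {N : (Fin n → ℝ) → ℝ}

def AccP (p : Fin n → ℝ) (S : Set (Fin n → ℝ)) : Prop :=
  ∀ ε > 0, ∃ z ∈ S, z ≠ p ∧ ‖z - p‖ < ε

def Tset (N : (Fin n → ℝ) → ℝ) (M : Set (Fin n → ℝ)) (p : Fin n → ℝ)
    (s : Finset (Fin n → ℝ)) : Set (Fin n → ℝ) :=
  {z | z ∈ M ∧ ∀ x ∈ s, N (z - x) ≠ N (p - x)}

def InvP (N : (Fin n → ℝ) → ℝ) (M : Set (Fin n → ℝ)) (p : Fin n → ℝ)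
    (s : Finset (Fin n → ℝ)) : Prop :=
  (∀ x ∈ s, x ∈ M) ∧ (∀ x ∈ s, x ≠ p) ∧
  (∀ x ∈ s, ∀ x' ∈ s, x ≠ x' → N (x - p) ≠ N (x' - p)) ∧
  (∀ x ∈ s, ∀ x' ∈ s, ∀ z ∈ s, x ≠ x' → N (x - x') ≠ N (z - p)) ∧
  (∀ x ∈ s, ∀ x' ∈ s, ∀ z ∈ s, ∀ w ∈ s, x ≠ x' → z ≠ w → N (x - x') = N (z - w) →
    ({x, x'} : Set (Fin n → ℝ)) = {z, w})

section basic
variable (hN : IsNormOn n N)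
include hN

lemma N_zero : N 0 = 0 := (hN.1 0).mpr rfl

lemma N_neg (x : Fin n → ℝ) : N (-x) = N x := by
  have h := hN.2.1 (-1) x
  simpa using h

lemma N_nonneg (x : Fin n → ℝ) : 0 ≤ N x := by
  have h := hN.2.2 x (-x)
  rw [add_neg_cancel, N_zero hN, N_neg hN] at h
  linarith

lemma N_pos {x : Fin n → ℝ} (hx : x ≠ 0) : 0 < N x :=
  lt_of_le_of_ne (N_nonneg hN x) fun h => hx ((hN.1 x).mp h.symm)

lemma N_sub_symm (x y : Fin n → ℝ) : N (x - y) = N (y - x) := by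
  rw [← N_neg hN (y - x), neg_sub]

lemma N_sub_le (x y z : Fin n → ℝ) : N (x - z) ≤ N (x - y) + N (y - z) := by
  have h := hN.2.2 (x - y) (y - z)
  rwa [sub_add_sub_cancel] at h

/-- band estimate: `|N (y - x) - N (p - x)| ≤ N (y - p)`. -/
lemma abs_band (p x y : Fin n → ℝ) : |N (y - x) - N (p - x)| ≤ N (y - p) := by
  rw [abs_le]
  constructor
  · have h1 := N_sub_le hN p y x
    have h2 : N (p - y) = N (y - p) := N_sub_symm hN p y
    linarith
  · have h1 := N_sub_le hN y p x
    linarith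

lemma N_sum_le {ι : Type*} (s : Finset ι) (f : ι → Fin n → ℝ) :
    N (∑ i ∈ s, f i) ≤ ∑ i ∈ s, N (f i) := by
  classical
  induction s using Finset.induction with
  | empty => simp [N_zero hN]
  | insert _ _ h ih =>
      rw [Finset.sum_insert h, Finset.sum_insert h]
      calc N (_ + _) ≤ N _ + N _ := hN.2.2 _ _
        _ ≤ _ := by linarith

lemma exists_C : ∃ C : ℝ, 0 < C ∧ ∀ x, N x ≤ C * ‖x‖ := by
  classical
  refine ⟨(∑ i : Fin n, N (fun j => if i = j then (1:ℝ) else 0)) + 1, ?_, ?_⟩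
  · have : (0:ℝ) ≤ ∑ i : Fin n, N (fun j => if i = j then (1:ℝ) else 0) :=
      Finset.sum_nonneg fun i _ => N_nonneg hN _
    linarith
  · intro x
    have hx : x = ∑ i : Fin n, x i • (fun j => if i = j then (1:ℝ) else 0) := pi_eq_sum_univ x
    calc N x = N (∑ i : Fin n, x i • (fun j => if i = j then (1:ℝ) else 0)) := by rw [← hx]
      _ ≤ ∑ i : Fin n, N (x i • (fun j => if i = j then (1:ℝ) else 0)) := N_sum_le hN _ _
      _ = ∑ i : Fin n, |x i| * N (fun j => if i = j then (1:ℝ) else 0) := by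
          simp [hN.2.1]
      _ ≤ ∑ i : Fin n, ‖x‖ * N (fun j => if i = j then (1:ℝ) else 0) := by
          refine Finset.sum_le_sum fun i _ => ?_
          have h1 : |x i| ≤ ‖x‖ := by
            simpa [Real.norm_eq_abs] using norm_le_pi_norm x i
          exact mul_le_mul_of_nonneg_right h1 (N_nonneg hN _)
      _ = (∑ i : Fin n, N (fun j => if i = j then (1:ℝ) else 0)) * ‖x‖ := by
          rw [← Finset.mul_sum, mul_comm]
      _ ≤ ((∑ i : Fin n, N (fun j => if i = j then (1:ℝ) else 0)) + 1) * ‖x‖ := by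
          have := norm_nonneg x; nlinarith

lemma N_continuous : Continuous N := by
  obtain ⟨C, hC, hCb⟩ := exists_C hN
  have hlip : LipschitzWith (Real.toNNReal C) N := by
    apply LipschitzWith.of_dist_le_mul
    intro x y
    rw [Real.dist_eq, dist_eq_norm]
    have h1 : N x ≤ N (x - y) + N y := by
      have := N_sub_le hN x y 0
      simpa [N_zero hN, sub_zero] using (by
        have h := hN.2.2 (x - y) y
        rwa [sub_add_cancel] at h : N x ≤ N (x - y) + N y)
    have h2 : N y ≤ N (x - y) + N x := by
      have h := hN.2.2 (y - x) x
      rw [sub_add_cancel] at h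
      rw [N_sub_symm hN y x] at h
      linarith
    have h3 : |N x - N y| ≤ N (x - y) := by
      rw [abs_le]; constructor <;> linarith
    have h4 := hCb (x - y)
    calc |N x - N y| ≤ N (x - y) := h3
      _ ≤ C * ‖x - y‖ := h4
      _ = (Real.toNNReal C : ℝ) * ‖x - y‖ := by rw [Real.coe_toNNReal _ hC.le]
  exact hlip.continuous

lemma exists_c : ∃ c : ℝ, 0 < c ∧ ∀ x, c * ‖x‖ ≤ N x := by
  rcases subsingleton_or_nontrivial (Fin n → ℝ) with hs | hs
  · refine ⟨1, one_pos, fun x => ?_⟩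
    have hx : x = 0 := Subsingleton.elim x 0
    simp [hx, N_zero hN]
  · have hsph : IsCompact (Metric.sphere (0 : Fin n → ℝ) 1) := isCompact_sphere 0 1
    have hne : (Metric.sphere (0 : Fin n → ℝ) 1).Nonempty :=
      NormedSpace.sphere_nonempty.mpr zero_le_one
    obtain ⟨z, hz, hzmin⟩ := hsph.exists_isMinOn hne (N_continuous hN).continuousOn
    have hz1 : ‖z‖ = 1 := by simpa using hz
    have hzpos : 0 < N z := by
      refine N_pos hN fun h => ?_
      rw [h] at hz1; simp at hz1
    refine ⟨N z, hzpos, fun x => ?_⟩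
    rcases eq_or_ne x 0 with rfl | hx
    · simp [N_zero hN]
    · have hnx : (0:ℝ) < ‖x‖ := norm_pos_iff.mpr hx
      have hmem : ‖x‖⁻¹ • x ∈ Metric.sphere (0 : Fin n → ℝ) 1 := by
        simp [norm_smul, abs_of_pos (inv_pos.mpr hnx), inv_mul_cancel₀ hnx.ne']
      have hmin := isMinOn_iff.mp hzmin _ hmem
      rw [hN.2.1] at hmin
      rw [abs_of_pos (inv_pos.mpr hnx)] at hmin
      have : N z * ‖x‖ ≤ ‖x‖⁻¹ * N x * ‖x‖ := mul_le_mul_of_nonneg_right hmin hnx.le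
      rw [mul_comm (‖x‖⁻¹) (N x), mul_assoc, inv_mul_cancel₀ hnx.ne', mul_one] at this
      linarith

/-- Key impossibility: no sequence converging to `p` can have all later points at
`N`-distance exactly `N (p - yₛ)` from each earlier point `yₛ`. -/
lemma lemmaA (p : Fin n → ℝ) (y : ℕ → Fin n → ℝ) (hy : ∀ t, y t ≠ p)
    (hconv : Tendsto (fun t => ‖y t - p‖) atTop (𝓝 0))
    (hsph : ∀ s t, s < t → N (y t - y s) = N (p - y s)) : False := by
  obtain ⟨C, hC, hCb⟩ := exists_C hN
  obtain ⟨c, hc, hcb⟩ := exists_c hN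
  set r : ℕ → ℝ := fun t => N (y t - p) with hr
  have hrpos : ∀ t, 0 < r t := fun t => N_pos hN (sub_ne_zero.mpr (hy t))
  set u : ℕ → Fin n → ℝ := fun t => (r t)⁻¹ • (y t - p) with hu
  have hNu : ∀ t, N (u t) = 1 := by
    intro t
    rw [hu]
    simp only [hN.2.1]
    rw [abs_of_pos (inv_pos.mpr (hrpos t))]
    exact inv_mul_cancel₀ (hrpos t).ne'
  have hub : ∀ t, u t ∈ Metric.closedBall (0 : Fin n → ℝ) (1/c) := by
    intro t
    have h1 := hcb (u t)
    rw [hNu t] at h1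
    rw [Metric.mem_closedBall, dist_zero_right]
    rw [le_div_iff₀ hc]
    linarith
  obtain ⟨a, -, φ, hφ, hφconv⟩ := tendsto_subseq_of_bounded isBounded_closedBall hub
  have hr0 : Tendsto r atTop (𝓝 0) := by
    apply squeeze_zero (fun t => (hrpos t).le) (fun t => hCb (y t - p))
    have := hconv.const_mul C
    simpa using this
  have key : ∀ k, 1 ≤ N (u (φ k) - a) := by
    intro k
    have hev : ∀ᶠ l in atTop, 1 ≤ N (u (φ k) - u (φ l)) := by
      have h1 : ∀ᶠ l in atTop, r (φ l) < r (φ k) :=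
        (hr0.comp hφ.tendsto_atTop).eventually_lt_const (hrpos (φ k))
      filter_upwards [h1, eventually_gt_atTop k] with l hrl hkl
      set s : ℝ := r (φ l) / r (φ k) with hs
      have hs0 : 0 < s := div_pos (hrpos _) (hrpos _)
      have hs1 : s ≤ 1 := by
        rw [hs, div_le_one (hrpos (φ k))]; exact hrl.le
      have hklφ : φ k < φ l := hφ hkl
      have hEq1 : u (φ k) - s • u (φ l) = (r (φ k))⁻¹ • (y (φ k) - y (φ l)) := by
        rw [hu]
        simp only
        rw [smul_smul]
        have : s * (r (φ l))⁻¹ = (r (φ k))⁻¹ := by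
          field_simp [hs, (hrpos (φ l)).ne', (hrpos (φ k)).ne']
          rw [hs, div_mul_cancel₀ _ (hrpos (φ k)).ne']
        rw [this, ← smul_sub]
        congr 1
        abel
      have hEq2 : N (u (φ k) - s • u (φ l)) = 1 := by
        rw [hEq1, hN.2.1, abs_of_pos (inv_pos.mpr (hrpos (φ k)))]
        rw [N_sub_symm hN (y (φ k)) (y (φ l)), hsph (φ k) (φ l) hklφ]
        rw [N_sub_symm hN p (y (φ k))]
        exact inv_mul_cancel₀ (hrpos (φ k)).ne'
      have hEq3 : u (φ k) - s • u (φ l) =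
          (1 - s) • u (φ k) + s • (u (φ k) - u (φ l)) := by
        rw [smul_sub, sub_smul, one_smul]
        abel
      have htri : N (u (φ k) - s • u (φ l)) ≤
          (1 - s) * 1 + s * N (u (φ k) - u (φ l)) := by
        rw [hEq3]
        calc N _ ≤ N ((1 - s) • u (φ k)) + N (s • (u (φ k) - u (φ l))) := hN.2.2 _ _
          _ = (1 - s) * 1 + s * N (u (φ k) - u (φ l)) := by
              rw [hN.2.1 (1 - s), hN.2.1 s, hNu,
                abs_of_nonneg (by linarith : (0:ℝ) ≤ 1 - s), abs_of_pos hs0]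
      rw [hEq2] at htri
      nlinarith [N_nonneg hN (u (φ k) - u (φ l))]
    have hcont : Tendsto (fun l => N (u (φ k) - u (φ l))) atTop (𝓝 (N (u (φ k) - a))) := by
      have h1 : Tendsto (fun l => u (φ k) - u (φ l)) atTop (𝓝 (u (φ k) - a)) :=
        tendsto_const_nhds.sub hφconv
      exact ((N_continuous hN).continuousAt).tendsto.comp h1
    exact ge_of_tendsto hcont hev
  have hlim : Tendsto (fun k => N (u (φ k) - a)) atTop (𝓝 0) := by
    have h1 : Tendsto (fun k => u (φ k) - a) atTop (𝓝 0) := by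
      simpa using hφconv.sub (tendsto_const_nhds (x := a))
    have h2 := ((N_continuous hN).continuousAt).tendsto.comp h1
    simpa [N_zero hN, Function.comp_def] using h2
  have := (hlim.eventually_lt_const one_pos).exists
  obtain ⟨k, hk⟩ := this
  linarith [key k]

omit hN in
lemma finset_min_pos {α : Type*} (s : Finset α) (g : α → ℝ) (hg : ∀ x ∈ s, 0 < g x) :
    ∃ ε > 0, ∀ x ∈ s, ε ≤ g x := by
  classical
  induction s using Finset.induction with
  | empty => exact ⟨1, one_pos, by simp⟩
  | @insert a s ha ih =>
      obtain ⟨ε, hε, hle⟩ := ih fun x hx => hg x (Finset.mem_insert_of_mem hx)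
      refine ⟨min ε (g a), lt_min hε (hg a (Finset.mem_insert_self a s)), fun x hx => ?_⟩
      rcases Finset.mem_insert.mp hx with rfl | hx
      · exact min_le_right _ _
      · exact le_trans (min_le_left _ _) (hle x hx)

/-- One can always find a point of `S` near `p` whose "own sphere through `p`" can be
removed from `S` keeping `p` an accumulation point. -/
lemma lemmaE (p : Fin n → ℝ) (S : Set (Fin n → ℝ)) (hS : AccP p S) {δ : ℝ} (hδ : 0 < δ) :
    ∃ x ∈ S, x ≠ p ∧ ‖x - p‖ < δ ∧ AccP p {z | z ∈ S ∧ N (z - x) ≠ N (p - x)} := by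
  classical
  by_contra hcon
  push_neg at hcon
  have hcon' : ∀ x, (x ∈ S ∧ x ≠ p ∧ ‖x - p‖ < δ) →
      ∃ ε > 0, ∀ z ∈ S, z ≠ p → ‖z - p‖ < ε → N (z - x) = N (p - x) := by
    rintro x ⟨hx1, hx2, hx3⟩
    have h := hcon x hx1 hx2 hx3
    unfold AccP at h
    push_neg at h
    obtain ⟨ε, hε, hzs⟩ := h
    refine ⟨ε, hε, fun z hz hzp hzε => ?_⟩
    by_contra hne
    have := hzs z ⟨hz, hne⟩ hzp
    linarith
  choose! εf hεf1 hεf2 using hcon'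
  obtain ⟨f, hfP, hfr⟩ := exists_seq_of_forall_finset_exists
    (fun x => x ∈ S ∧ x ≠ p ∧ ‖x - p‖ < δ)
    (fun x z => N (z - x) = N (p - x) ∧ 2 * ‖z - p‖ ≤ ‖x - p‖)
    (by
      intro s hs
      obtain ⟨η, hη, hηle⟩ := finset_min_pos s (fun x => min (εf x) (‖x - p‖ / 2))
        (fun x hx => by
          have hP := hs x hx
          have h1 := hεf1 x hP
          have h2 : (0:ℝ) < ‖x - p‖ := norm_pos_iff.mpr (sub_ne_zero.mpr hP.2.1)
          exact lt_min h1 (by linarith))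
      obtain ⟨z, hzS, hzp, hzlt⟩ := hS (min δ η) (lt_min hδ hη)
      refine ⟨z, ⟨hzS, hzp, lt_of_lt_of_le hzlt (min_le_left _ _)⟩, fun x hx => ?_⟩
      have hxP := hs x hx
      have hzη : ‖z - p‖ < η := lt_of_lt_of_le hzlt (min_le_right _ _)
      have h1 : ‖z - p‖ < εf x :=
        lt_of_lt_of_le hzη (le_trans (hηle x hx) (min_le_left _ _))
      have h2 : ‖z - p‖ ≤ ‖x - p‖ / 2 :=
        le_trans hzη.le (le_trans (hηle x hx) (min_le_right _ _))
      exact ⟨hεf2 x hxP z hzS hzp h1, by linarith⟩)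
  have hdec : ∀ t, ‖f (t+1) - p‖ ≤ (1/2) * ‖f t - p‖ := by
    intro t
    have := (hfr t (t+1) (lt_add_one t)).2
    linarith
  have hgeom : ∀ t, ‖f t - p‖ ≤ (1/2)^t * ‖f 0 - p‖ := by
    intro t
    induction t with
    | zero => simp
    | succ t ih =>
        calc ‖f (t+1) - p‖ ≤ (1/2) * ‖f t - p‖ := hdec t
          _ ≤ (1/2) * ((1/2)^t * ‖f 0 - p‖) := by linarith
          _ = (1/2)^(t+1) * ‖f 0 - p‖ := by ring
  have hconv : Tendsto (fun t => ‖f t - p‖) atTop (𝓝 0) := by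
    apply squeeze_zero (fun t => norm_nonneg _) hgeom
    have h1 : Tendsto (fun t : ℕ => ((1:ℝ)/2)^t) atTop (𝓝 0) :=
      tendsto_pow_atTop_nhds_zero_of_lt_one (by norm_num) (by norm_num)
    simpa using h1.mul_const ‖f 0 - p‖
  exact lemmaA hN p f (fun t => (hfP t).2.1) hconv (fun s t h => (hfr s t h).1)

end basic

end DistinctDistAux

open DistinctDistAux

/-- Every infinite bounded set `M ⊆ ℝⁿ` contains an infinite subset all of whose pairwise
`N`-distances are distinct. -/
theorem exists_infinite_subset_distinct_distances (n : ℕ) (N : (Fin n → ℝ) → ℝ)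
    (hN : IsNormOn n N) (M : Set (Fin n → ℝ)) (hMinf : M.Infinite)
    (hMbdd : ∃ (x₀ : Fin n → ℝ) (R : ℝ), ∀ x ∈ M, N (x - x₀) ≤ R) :
    ∃ M' : Set (Fin n → ℝ), M' ⊆ M ∧ M'.Infinite ∧
      ∀ x ∈ M', ∀ x' ∈ M', ∀ y ∈ M', ∀ y' ∈ M', x ≠ x' → y ≠ y' →
        N (x - x') = N (y - y') → ({x, x'} : Set (Fin n → ℝ)) = {y, y'} := by
  classical
  rcases subsingleton_or_nontrivial (Fin n → ℝ) with hsub | hnt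
  · haveI := hsub
    haveI : Finite (Fin n → ℝ) := Finite.of_subsingleton
    exact absurd M.toFinite hMinf
  obtain ⟨C, hC, hCb⟩ := exists_C hN
  obtain ⟨c, hc, hcb⟩ := exists_c hN
  -- boundedness in the usual norm
  obtain ⟨x₀, R, hR⟩ := hMbdd
  have hMb : Bornology.IsBounded M := by
    apply (isBounded_closedBall (x := x₀) (r := R / c)).subset
    intro x hx
    rw [Metric.mem_closedBall, dist_eq_norm]
    have h1 := hcb (x - x₀)
    have h2 := hR x hx
    rw [le_div_iff₀ hc]
    linarith
  -- accumulation point of M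
  obtain ⟨p, hpAcc⟩ : ∃ p, AccP p M := by
    set e := hMinf.natEmbedding with he
    have hx : ∀ t : ℕ, ((e t : M) : Fin n → ℝ) ∈ M := fun t => (e t).2
    obtain ⟨a, -, φ, hφ, hφc⟩ := tendsto_subseq_of_bounded hMb hx
    have einj : Function.Injective (fun t : ℕ => ((e t : M) : Fin n → ℝ)) :=
      fun a b h => e.injective (Subtype.ext h)
    refine ⟨a, fun ε hε => ?_⟩
    obtain ⟨K, hK⟩ := Metric.tendsto_atTop.mp hφc ε hε
    rcases eq_or_ne (((e (φ K) : M)) : Fin n → ℝ) a with h | h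
    · refine ⟨(e (φ (K+1)) : M), hx _, ?_, ?_⟩
      · intro hEq
        have : ((e (φ K) : M) : Fin n → ℝ) = ((e (φ (K+1)) : M) : Fin n → ℝ) := by
          rw [h, hEq]
        have := hφ.injective (einj this)
        omega
      · have := hK (K+1) (by omega)
        rwa [Function.comp_apply, dist_eq_norm] at this
    · refine ⟨(e (φ K) : M), hx _, h, ?_⟩
      have := hK K le_rfl
      rwa [Function.comp_apply, dist_eq_norm] at this
  -- the residual set and the invariant
  set T : Finset (Fin n → ℝ) → Set (Fin n → ℝ) := Tset N M p with hT
  set Inv : Finset (Fin n → ℝ) → Prop := InvP N M p with hInvDef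
  have step : ∀ s : Finset (Fin n → ℝ), Inv s → AccP p (T s) →
      ∃ y, y ∉ s ∧ Inv (insert y s) ∧ AccP p (T (insert y s)) := by
    intro s hInv hAcc
    obtain ⟨hsM, hsp, hsρ, hsc, hsb⟩ := hInv
    obtain ⟨ε₁, hε₁, hε₁le⟩ := finset_min_pos s (fun x => N (x - p) / 2)
      (fun x hx => by
        have := N_pos hN (sub_ne_zero.mpr (hsp x hx))
        linarith)
    obtain ⟨ε₂, hε₂, hε₂le⟩ := finset_min_pos (s ×ˢ s)
      (fun q => if q.1 = q.2 then 1 else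
        min (|N (q.1 - p) - N (q.2 - p)| / 2) (N (q.1 - q.2)))
      (fun q hq => by
        rcases Finset.mem_product.mp hq with ⟨h1, h2⟩
        by_cases h : q.1 = q.2
        · simp [h]
        · rw [if_neg h]
          refine lt_min ?_ (N_pos hN (sub_ne_zero.mpr h))
          have := hsρ _ h1 _ h2 h
          have : 0 < |N (q.1 - p) - N (q.2 - p)| := abs_pos.mpr (sub_ne_zero.mpr this)
          linarith)
    obtain ⟨ε₃, hε₃, hε₃le⟩ := finset_min_pos ((s ×ˢ s) ×ˢ s)
      (fun q => if q.1.1 = q.1.2 then 1 else |N (q.1.1 - q.1.2) - N (q.2 - p)|)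
      (fun q hq => by
        rcases Finset.mem_product.mp hq with ⟨h12, h3⟩
        rcases Finset.mem_product.mp h12 with ⟨h1, h2⟩
        by_cases h : q.1.1 = q.1.2
        · simp [h]
        · rw [if_neg h]
          exact abs_pos.mpr (sub_ne_zero.mpr (hsc _ h1 _ h2 _ h3 h)))
    set ε := min ε₁ (min ε₂ ε₃) with hεdef
    have hε : 0 < ε := lt_min hε₁ (lt_min hε₂ hε₃)
    have hεe1 : ε ≤ ε₁ := min_le_left _ _
    have hεe2 : ε ≤ ε₂ := le_trans (min_le_right _ _) (min_le_left _ _)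
    have hεe3 : ε ≤ ε₃ := le_trans (min_le_right _ _) (min_le_right _ _)
    have Ebnd1 : ∀ x ∈ s, 2 * ε ≤ N (x - p) := by
      intro x hx
      have h := hε₁le x hx
      have : ε ≤ N (x - p) / 2 := le_trans hεe1 h
      linarith
    have Ebnd2 : ∀ x ∈ s, ∀ x' ∈ s, x ≠ x' → 2 * ε ≤ |N (x - p) - N (x' - p)| := by
      intro x hx x' hx' hne
      have h := hε₂le (x, x') (Finset.mem_product.mpr ⟨hx, hx'⟩)
      simp only [if_neg hne] at h
      have : ε ≤ |N (x - p) - N (x' - p)| / 2 := le_trans hεe2 (le_trans h (min_le_left _ _))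
      linarith
    have Ebnd3 : ∀ x ∈ s, ∀ x' ∈ s, x ≠ x' → ε ≤ N (x - x') := by
      intro x hx x' hx' hne
      have h := hε₂le (x, x') (Finset.mem_product.mpr ⟨hx, hx'⟩)
      simp only [if_neg hne] at h
      exact le_trans hεe2 (le_trans h (min_le_right _ _))
    have Ebnd4 : ∀ x ∈ s, ∀ x' ∈ s, ∀ z ∈ s, x ≠ x' →
        ε ≤ |N (x - x') - N (z - p)| := by
      intro x hx x' hx' z hz hne
      have h := hε₃le ((x, x'), z)
        (Finset.mem_product.mpr ⟨Finset.mem_product.mpr ⟨hx, hx'⟩, hz⟩)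
      simp only [if_neg hne] at h
      exact le_trans hεe3 h
    obtain ⟨y, hyT, hyp, hylt, hAcc'⟩ := lemmaE hN p (T s) hAcc (div_pos hε hC)
    have hyM : y ∈ M := hyT.1
    have hysph : ∀ x ∈ s, N (y - x) ≠ N (p - x) := hyT.2
    have hρy : N (y - p) < ε := by
      calc N (y - p) ≤ C * ‖y - p‖ := hCb _
        _ < C * (ε / C) := by exact mul_lt_mul_of_pos_left hylt hC
        _ = ε := by field_simp
    have hρypos : 0 < N (y - p) := N_pos hN (sub_ne_zero.mpr hyp)
    have hband : ∀ x : Fin n → ℝ, |N (y - x) - N (x - p)| ≤ N (y - p) := by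
      intro x
      have h := abs_band hN p x y
      rwa [N_sub_symm hN p x] at h
    have hynotin : y ∉ s := by
      intro hys
      have := Ebnd1 y hys
      linarith
    -- key separation facts
    have k2 : ∀ x ∈ s, ∀ x' ∈ s, x ≠ x' → N (y - x) ≠ N (y - x') := by
      intro x hx x' hx' hne heq
      have b1 := abs_le.mp (hband x)
      have b2 := abs_le.mp (hband x')
      have h2 := Ebnd2 x hx x' hx' hne
      rcases le_or_gt (N (x - p)) (N (x' - p)) with hle | hle
      · rw [abs_of_nonpos (by linarith)] at h2
        rw [heq] at b1
        linarith [b1.1, b1.2, b2.1, b2.2]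
      · rw [abs_of_pos (by linarith)] at h2
        rw [heq] at b1
        linarith [b1.1, b1.2, b2.1, b2.2]
    have k3 : ∀ x ∈ s, ∀ z ∈ s, ∀ w ∈ s, z ≠ w → N (y - x) ≠ N (z - w) := by
      intro x hx z hz w hw hne heq
      have b := abs_le.mp (hband x)
      have h4 := Ebnd4 z hz w hw x hx hne
      rcases le_or_gt (N (z - w)) (N (x - p)) with hle | hle
      · rw [abs_of_nonpos (by linarith)] at h4
        rw [heq] at b
        linarith [b.1, b.2]
      · rw [abs_of_pos (by linarith)] at h4
        rw [heq] at b
        linarith [b.1, b.2]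
    have k4 : ∀ x ∈ s, N (y - p) ≠ N (x - p) := by
      intro x hx heq
      have := Ebnd1 x hx
      linarith
    have k6 : ∀ x ∈ s, ∀ z ∈ s, N (y - x) ≠ N (z - p) := by
      intro x hx z hz heq
      by_cases h : z = x
      · subst h
        exact hysph z hx (by rw [heq, N_sub_symm hN z p])
      · have b := abs_le.mp (hband x)
        have h2 := Ebnd2 x hx z hz (fun hh => h hh.symm)
        rcases le_or_gt (N (x - p)) (N (z - p)) with hle | hle
        · rw [abs_of_nonpos (by linarith)] at h2
          rw [heq] at b
          linarith [b.1, b.2]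
        · rw [abs_of_pos (by linarith)] at h2
          rw [heq] at b
          linarith [b.1, b.2]
    have k7 : ∀ x ∈ s, N (y - x) ≠ N (y - p) := by
      intro x hx heq
      have b := abs_le.mp (hband x)
      have h1 := Ebnd1 x hx
      rw [heq] at b
      linarith [b.1, b.2]
    have k5 : ∀ x ∈ s, ∀ x' ∈ s, x ≠ x' → N (x - x') ≠ N (y - p) := by
      intro x hx x' hx' hne heq
      have := Ebnd3 x hx x' hx' hne
      linarith
    have hyne : ∀ x ∈ s, y ≠ x := by
      intro x hx h
      exact hynotin (h ▸ hx)
    have pairShape : ∀ a ∈ insert y s, ∀ b ∈ insert y s, a ≠ b →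
        (a ∈ s ∧ b ∈ s) ∨
        (∃ e ∈ s, ({a, b} : Set (Fin n → ℝ)) = {y, e} ∧ N (a - b) = N (y - e)) := by
      intro a ha b hb hab
      rcases Finset.mem_insert.mp ha with h1 | h1
      · rcases Finset.mem_insert.mp hb with h2 | h2
        · exact absurd (h1.trans h2.symm) hab
        · right
          exact ⟨b, h2, by rw [h1], by rw [h1]⟩
      · rcases Finset.mem_insert.mp hb with h2 | h2
        · right
          refine ⟨a, h1, ?_, ?_⟩
          · rw [h2]
            exact Set.pair_comm a y
          · rw [h2, N_sub_symm hN a y]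
        · left
          exact ⟨h1, h2⟩
    refine ⟨y, hynotin, ⟨?_, ?_, ?_, ?_, ?_⟩, ?_⟩
    · intro x hx
      rcases Finset.mem_insert.mp hx with h1 | h1
      · rw [h1]; exact hyM
      · exact hsM x h1
    · intro x hx
      rcases Finset.mem_insert.mp hx with h1 | h1
      · rw [h1]; exact hyp
      · exact hsp x h1
    · intro x hx x' hx' hne
      rcases Finset.mem_insert.mp hx with h1 | h1
      · rcases Finset.mem_insert.mp hx' with h2 | h2
        · exact absurd (h1.trans h2.symm) hne
        · rw [h1]; exact k4 x' h2
      · rcases Finset.mem_insert.mp hx' with h2 | h2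
        · rw [h2]; exact Ne.symm (k4 x h1)
        · exact hsρ x h1 x' h2 hne
    · intro x hx x' hx' z hz hne
      rcases pairShape x hx x' hx' hne with ⟨h1, h2⟩ | ⟨e, he, hpe, hde⟩
      · rcases Finset.mem_insert.mp hz with h3 | h3
        · rw [h3]
          exact k5 x h1 x' h2 hne
        · exact hsc x h1 x' h2 z h3 hne
      · rw [hde]
        rcases Finset.mem_insert.mp hz with h3 | h3
        · rw [h3]
          exact k7 e he
        · exact k6 e he z h3
    · intro x hx x' hx' z hz w hw hxx hzw heq
      rcases pairShape x hx x' hx' hxx with ⟨h1, h2⟩ | ⟨e, he, hpe, hde⟩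
      · rcases pairShape z hz w hw hzw with ⟨h3, h4⟩ | ⟨e', he', hpe', hde'⟩
        · exact hsb x h1 x' h2 z h3 w h4 hxx hzw heq
        · exact absurd (heq.trans hde').symm (k3 e' he' x h1 x' h2 hxx)
      · rcases pairShape z hz w hw hzw with ⟨h3, h4⟩ | ⟨e', he', hpe', hde'⟩
        · exact absurd (hde.symm.trans heq) (k3 e he z h3 w h4 hzw)
        · have hee : N (y - e) = N (y - e') := hde.symm.trans (heq.trans hde')
          rcases eq_or_ne e e' with rfl | hne
          · rw [hpe, hpe']
          · exact absurd hee (k2 e he e' he' hne)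
    · -- accumulation for the extended finset
      have hTeq : {z | z ∈ T s ∧ N (z - y) ≠ N (p - y)} = T (insert y s) := by
        ext v
        simp only [hT, Tset, Set.mem_setOf_eq, Finset.mem_insert]
        constructor
        · rintro ⟨⟨h1, h2⟩, h3⟩
          refine ⟨h1, fun x hx => ?_⟩
          rcases hx with rfl | hx
          exacts [h3, h2 x hx]
        · rintro ⟨h1, h2⟩
          exact ⟨⟨h1, fun x hx => h2 x (Or.inr hx)⟩, h2 y (Or.inl rfl)⟩
      rwa [hTeq] at hAcc'
  have base : Inv (∅ : Finset (Fin n → ℝ)) ∧ AccP p (T ∅) := by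
    constructor
    · exact ⟨by simp, by simp, by simp, by simp, by simp⟩
    · have hTM : T ∅ = M := by
        ext z
        simp [hT, Tset]
      rwa [hTM]
  let G : ℕ → {s : Finset (Fin n → ℝ) // Inv s ∧ AccP p (T s)} := fun t =>
    Nat.rec ⟨∅, base⟩ (fun _ prev =>
      ⟨insert (Classical.choose (step prev.1 prev.2.1 prev.2.2)) prev.1,
        (Classical.choose_spec (step prev.1 prev.2.1 prev.2.2)).2⟩) t
  have hGsucc : ∀ t : ℕ, ∃ y, y ∉ (G t).1 ∧ (G (t+1)).1 = insert y (G t).1 := by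
    intro t
    exact ⟨Classical.choose (step (G t).1 (G t).2.1 (G t).2.2),
      (Classical.choose_spec (step (G t).1 (G t).2.1 (G t).2.2)).1, rfl⟩
  have hGcard : ∀ t : ℕ, (G t).1.card = t := by
    intro t
    induction t with
    | zero => rfl
    | succ t ih =>
        obtain ⟨y, hy, hEq⟩ := hGsucc t
        rw [hEq, Finset.card_insert_of_notMem hy, ih]
  have hGmono : ∀ t t' : ℕ, t ≤ t' → (G t).1 ⊆ (G t').1 := by
    intro t t' h
    induction t', h using Nat.le_induction with
    | base => exact Finset.Subset.refl _
    | succ t'' h'' ih =>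
        obtain ⟨y, hy, hEq⟩ := hGsucc t''
        rw [hEq]
        exact ih.trans (Finset.subset_insert _ _)
  refine ⟨⋃ t : ℕ, ((G t).1 : Set (Fin n → ℝ)), ?_, ?_, ?_⟩
  · intro x hx
    rcases Set.mem_iUnion.mp hx with ⟨t, ht⟩
    exact (G t).2.1.1 x ht
  · intro hfin
    have hsub : ∀ t : ℕ, (G t).1 ⊆ hfin.toFinset := by
      intro t x hx
      exact hfin.mem_toFinset.mpr (Set.mem_iUnion.mpr ⟨t, hx⟩)
    have h1 := Finset.card_le_card (hsub (hfin.toFinset.card + 1))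
    have h2 := hGcard (hfin.toFinset.card + 1)
    omega
  · intro x hx x' hx' z hz w hw h1 h2 h3
    obtain ⟨t1, ht1⟩ := Set.mem_iUnion.mp hx
    obtain ⟨t2, ht2⟩ := Set.mem_iUnion.mp hx'
    obtain ⟨t3, ht3⟩ := Set.mem_iUnion.mp hz
    obtain ⟨t4, ht4⟩ := Set.mem_iUnion.mp hw
    set t := max (max t1 t2) (max t3 t4) with htdef
    refine (G t).2.1.2.2.2.2 x ?_ x' ?_ z ?_ w ?_ h1 h2 h3
    · exact hGmono t1 t (le_trans (le_max_left _ _) (le_max_left _ _)) ht1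
    · exact hGmono t2 t (le_trans (le_max_right _ _) (le_max_left _ _)) ht2
    · exact hGmono t3 t (le_trans (le_max_left _ _) (le_max_right _ _)) ht3
    · exact hGmono t4 t (le_trans (le_max_right _ _) (le_max_right _ _)) ht4
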